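/- Let n ≥ 1 and let λ, μ be partitions of length n (weakly decreasing n-tuples of nonnegative integers) with |λ| ≥ |μ|, and let k be a nonnegative integer with 2k ≥ |λ| − |μ|. Then K̃^{B_n}_{λ,μ}(q) = K^{B_n}_{λ+kκ_n, μ+kκ_n}(q), where κ_n = (1,…,1) ∈ ℤ^n. -/
import Mathlib

open Finset Polynomial

noncomputable section

/-- The standard basis vector `ε_i` of `ℚ^n` (we work in `ℚ^n` since
`ρ_{B_n}` has half-integer coordinates). -/
def eps (n : ℕ) (i : Fin n) : Fin n → ℚ := Pi.single i 1

/-- Pairs `(i,j)` with `i < j`. -/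
def pairsLt (n : ℕ) : Finset (Fin n × Fin n) :=
  Finset.univ.filter fun p => p.1 < p.2

/-- Positive roots of type `B_n`: the `ε_i - ε_j` and `ε_i + ε_j` for `i < j`,
together with the `ε_i`. -/
def RB (n : ℕ) : Finset (Fin n → ℚ) :=
  ((pairsLt n).image fun p => eps n p.1 - eps n p.2) ∪
    ((pairsLt n).image fun p => eps n p.1 + eps n p.2) ∪
      (Finset.univ.image fun i : Fin n => eps n i)

/-- The `q`-partition function of type `B_n`:
`P_q^B(β) = Σ_m q^{Σ_α m(α)}`, the sum over the (finitely many) functions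
`m : R_B^+ → ℕ` with `Σ_α m(α)·α = β`. -/
def PqB (n : ℕ) (β : Fin n → ℚ) : Polynomial ℤ :=
  ∑ᶠ m ∈ {m : (Fin n → ℚ) → ℕ |
      (∀ α, α ∉ RB n → m α = 0) ∧ ∑ α ∈ RB n, m α • α = β},
    (X : Polynomial ℤ) ^ ∑ α ∈ RB n, m α

/-- `ρ_n = (n, n-1, ..., 1)`. -/
def rho (n : ℕ) : Fin n → ℚ := fun i => (n : ℚ) - ((i : ℕ) : ℚ)

/-- `ρ_{B_n} = (n - 1/2, n - 3/2, ..., 1/2)`. -/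
def rhoB (n : ℕ) : Fin n → ℚ := fun i => (n : ℚ) - ((i : ℕ) : ℚ) - 1 / 2

/-- The restricted alternating sum
`K̃^{B_n}_{λ,μ}(q) = Σ_{σ ∈ S_n} sgn(σ) P_q^B(σ(λ+ρ_n) - (μ+ρ_n))`. -/
def KTB (n : ℕ) (lam mu : Fin n → ℚ) : Polynomial ℤ :=
  ∑ σ : Equiv.Perm (Fin n),
    (Equiv.Perm.sign σ : ℤ) •
      PqB n (fun i => (lam + rho n) (σ i) - (mu + rho n) i)

/-- The type `B_n` Kostka-Foulkes polynomial: the alternating sum over the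
hyperoctahedral group `W_{B_n}` (signed permutations, a signed permutation being
encoded as a pair `(σ, e)` acting by `v ↦ (i ↦ e i * v (σ i))`, whose determinant
is `sgn(σ) * ∏ i, e i`), with `ρ_{B_n} = (n - 1/2, ..., 1/2)`. -/
def KB (n : ℕ) (lam mu : Fin n → ℚ) : Polynomial ℤ :=
  ∑ σ : Equiv.Perm (Fin n), ∑ e : Fin n → ℤˣ,
    ((Equiv.Perm.sign σ : ℤ) * ∏ i, (e i : ℤ)) •
      PqB n (fun i => ((e i : ℤ) : ℚ) * (lam + rhoB n) (σ i) - (mu + rhoB n) i)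

lemma sum_mem_RB_nonneg {n : ℕ} {α : Fin n → ℚ} (h : α ∈ RB n) : 0 ≤ ∑ i, α i := by
  simp only [RB, Finset.mem_union, Finset.mem_image] at h
  rcases h with (⟨p, -, rfl⟩ | ⟨p, -, rfl⟩) | ⟨i, -, rfl⟩ <;>
    simp [eps, Pi.sub_apply, Pi.add_apply, Finset.sum_sub_distrib, Finset.sum_add_distrib,
      Finset.sum_pi_single']

lemma PqB_eq_zero_of_sum_neg {n : ℕ} {β : Fin n → ℚ} (h : ∑ i, β i < 0) : PqB n β = 0 := by
  have hset : {m : (Fin n → ℚ) → ℕ |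
      (∀ α, α ∉ RB n → m α = 0) ∧ ∑ α ∈ RB n, m α • α = β} = ∅ := by
    ext m
    simp only [Set.mem_setOf_eq, Set.mem_empty_iff_false, iff_false, not_and]
    intro _ hsum
    have hb : ∑ i, β i = ∑ α ∈ RB n, (m α : ℚ) * ∑ i, α i := by
      rw [← hsum]
      simp only [Finset.sum_apply, Pi.smul_apply, nsmul_eq_mul]
      rw [Finset.sum_comm]
      exact Finset.sum_congr rfl fun α _ => (Finset.mul_sum _ _ _).symm
    have : 0 ≤ ∑ α ∈ RB n, (m α : ℚ) * ∑ i, α i :=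
      Finset.sum_nonneg fun α hα => mul_nonneg (by positivity) (sum_mem_RB_nonneg hα)
    linarith [hb ▸ h]
  rw [PqB, hset, finsum_mem_empty]

/-- for partitions `λ, μ` of length `n` with `|λ| ≥ |μ|` and `2k ≥ |λ| - |μ|`,
`K̃^{B_n}_{λ,μ}(q) = K^{B_n}_{λ+kκ_n, μ+kκ_n}(q)` where `κ_n = (1,…,1)`. -/
theorem Ktilde_eq_KostkaFoulkes_B (n : ℕ) (hn : 1 ≤ n) (lam mu : Fin n → ℤ)
    (hlam : Antitone lam) (hlam0 : ∀ i, 0 ≤ lam i)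
    (hmu : Antitone mu) (hmu0 : ∀ i, 0 ≤ mu i)
    (hsum : ∑ i, mu i ≤ ∑ i, lam i)
    (k : ℕ) (hk : (∑ i, lam i) - ∑ i, mu i ≤ 2 * (k : ℤ)) :
    KTB n (fun i => (lam i : ℚ)) (fun i => (mu i : ℚ)) =
      KB n (fun i => (lam i : ℚ) + (k : ℚ)) (fun i => (mu i : ℚ) + (k : ℚ)) := by
  unfold KTB KB
  refine Finset.sum_congr rfl fun σ _ => ?_
  rw [Finset.sum_eq_single_of_mem (fun _ => (1 : ℤˣ)) (Finset.mem_univ _) ?_]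
  · simp only [Units.val_one, Finset.prod_const_one, mul_one, Int.cast_one, one_mul]
    have harg : (fun i => ((fun i => ((lam i : ℚ))) + rho n) (σ i) -
          ((fun i => ((mu i : ℚ))) + rho n) i) =
        (fun i => ((fun i => ((lam i : ℚ)) + (k : ℚ)) + rhoB n) (σ i) -
          ((fun i => ((mu i : ℚ)) + (k : ℚ)) + rhoB n) i) := by
      funext i
      simp only [Pi.add_apply, rho, rhoB]
      ring
    rw [harg]
  · -- every signed term with some -1 vanishes
    intro e _ hne
    obtain ⟨i₀, hi₀⟩ : ∃ i, e i = -1 := by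
      by_contra hc
      push_neg at hc
      exact hne (funext fun i => (Int.units_eq_one_or (e i)).resolve_right (hc i))
    rw [PqB_eq_zero_of_sum_neg, smul_zero]
    simp only [Pi.add_apply]
    obtain ⟨G, hGdef⟩ : ∃ G : Fin n → ℚ, G = fun j => ((lam j : ℚ) + (k : ℚ)) + rhoB n j :=
      ⟨_, rfl⟩
    obtain ⟨H, hHdef⟩ : ∃ H : Fin n → ℚ, H = fun i => ((mu i : ℚ) + (k : ℚ)) + rhoB n i :=
      ⟨_, rfl⟩
    have hGlb : ∀ j, (k : ℚ) + 1 / 2 ≤ G j := by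
      intro j
      have h1 : (0 : ℚ) ≤ (lam j : ℚ) := by exact_mod_cast hlam0 j
      have h2 : ((j : ℕ) : ℚ) + 1 ≤ (n : ℚ) := by exact_mod_cast j.isLt
      simp only [hGdef, rhoB]
      linarith
    have hk0 : (0 : ℚ) ≤ (k : ℚ) := by positivity
    have hepm : ∀ i, ((e i : ℤ) : ℚ) = 1 ∨ ((e i : ℤ) : ℚ) = -1 := fun i => by
      rcases Int.units_eq_one_or (e i) with h | h <;> simp [h]
    have hnn : ∀ i ∈ Finset.univ, 0 ≤ (1 - ((e i : ℤ) : ℚ)) * G (σ i) := by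
      intro i _
      have := hGlb (σ i)
      rcases hepm i with h | h <;> rw [h] <;> [norm_num; skip]
      nlinarith [hGlb (σ i), hk0]
    have hA : (1 - ((e i₀ : ℤ) : ℚ)) * G (σ i₀) ≤
        ∑ i, (1 - ((e i : ℤ) : ℚ)) * G (σ i) :=
      Finset.single_le_sum hnn (Finset.mem_univ i₀)
    have hi₀' : ((e i₀ : ℤ) : ℚ) = -1 := by rw [hi₀]; simp
    rw [hi₀'] at hA
    have hB : ∑ i, (((e i : ℤ) : ℚ) * G (σ i) - H i) =
        (∑ i, G (σ i)) - (∑ i, H i) - ∑ i, (1 - ((e i : ℤ) : ℚ)) * G (σ i) := by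
      rw [eq_sub_iff_add_eq, ← Finset.sum_add_distrib, ← Finset.sum_sub_distrib]
      exact Finset.sum_congr rfl fun i _ => by ring
    have hC : ∑ i, G (σ i) = ∑ j, G j := Equiv.sum_comp σ G
    have hD : (∑ j, G j) - (∑ i, H i) = (∑ j, (lam j : ℚ)) - ∑ j, (mu j : ℚ) := by
      rw [← Finset.sum_sub_distrib, ← Finset.sum_sub_distrib]
      exact Finset.sum_congr rfl fun j _ => by simp only [hGdef, hHdef]; ring
    have hE : (∑ j, (lam j : ℚ)) - (∑ j, (mu j : ℚ)) ≤ 2 * (k : ℚ) := by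
      have h := hk
      have : ((∑ i, lam i : ℤ) : ℚ) - ((∑ i, mu i : ℤ) : ℚ) ≤ 2 * (k : ℚ) := by
        exact_mod_cast h
      push_cast at this
      exact this
    have hF := hGlb (σ i₀)
    have key : ∑ i, (((e i : ℤ) : ℚ) * G (σ i) - H i) < 0 := by linarith
    simp only [hGdef, hHdef] at key
    exact key
end
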